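/- Consider the $2\times 2$ geometric local move $\ell : (a,b,c,d) \mapsto \big(\tfrac{bc}{a(b+c)},\, b,\, c,\, d(b+c)\big)$ defined for positive reals $a,b,c,d$. Then $\ell$ is a bijection from $(\mathbb{R}_{>0})^4$ to itself, and in logarithmic coordinates $(\log a,\log b,\log c,\log d)\mapsto(\log a',\log b',\log c',\log d')$ it has Jacobian determinant of absolute value $1$. -/

import Mathlib

open Real

/-- The 2×2 geometric local move
`(a,b,c,d) ↦ (bc/(a(b+c)), b, c, d(b+c))`. -/
noncomputable def localMove (p : ℝ × ℝ × ℝ × ℝ) : ℝ × ℝ × ℝ × ℝ :=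
  (p.2.1 * p.2.2.1 / (p.1 * (p.2.1 + p.2.2.1)), p.2.1, p.2.2.1,
    p.2.2.2 * (p.2.1 + p.2.2.1))

/-- The local move in logarithmic coordinates `u ↦ log (localMove (exp u))`. -/
noncomputable def localMoveLog (u : Fin 4 → ℝ) : Fin 4 → ℝ :=
  ![Real.log (exp (u 1) * exp (u 2) / (exp (u 0) * (exp (u 1) + exp (u 2)))),
    u 1, u 2,
    Real.log (exp (u 3) * (exp (u 1) + exp (u 2)))]

/-- Inverse of the local move. -/
noncomputable def localMoveInv (p : ℝ × ℝ × ℝ × ℝ) : ℝ × ℝ × ℝ × ℝ :=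
  (p.2.1 * p.2.2.1 / (p.1 * (p.2.1 + p.2.2.1)), p.2.1, p.2.2.1,
    p.2.2.2 / (p.2.1 + p.2.2.1))

/-- The geometric local move is a bijection of `(ℝ_{>0})⁴` onto itself, and in
logarithmic coordinates it is everywhere differentiable with Jacobian
determinant of absolute value `1`. -/
theorem localMove_bijective_and_log_jacobian :
    Set.BijOn localMove
      {p : ℝ × ℝ × ℝ × ℝ | 0 < p.1 ∧ 0 < p.2.1 ∧ 0 < p.2.2.1 ∧ 0 < p.2.2.2}
      {p : ℝ × ℝ × ℝ × ℝ | 0 < p.1 ∧ 0 < p.2.1 ∧ 0 < p.2.2.1 ∧ 0 < p.2.2.2} ∧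
    ∀ u : Fin 4 → ℝ, ∃ J : (Fin 4 → ℝ) →L[ℝ] (Fin 4 → ℝ),
      HasFDerivAt localMoveLog J u ∧
        |LinearMap.det (J : (Fin 4 → ℝ) →ₗ[ℝ] (Fin 4 → ℝ))| = 1 := by
  constructor
  · -- bijectivity
    apply Set.InvOn.bijOn (f' := localMoveInv)
    · constructor
      · rintro ⟨a, b, c, d⟩ ⟨ha, hb, hc, hd⟩
        have hbc : (0:ℝ) < b + c := by linarith
        simp only [localMove, localMoveInv]
        refine Prod.ext ?_ (Prod.ext rfl (Prod.ext rfl ?_)) <;>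
          (show _ = _; field_simp; try ring)
      · rintro ⟨a, b, c, d⟩ ⟨ha, hb, hc, hd⟩
        have hbc : (0:ℝ) < b + c := by linarith
        simp only [localMove, localMoveInv]
        refine Prod.ext ?_ (Prod.ext rfl (Prod.ext rfl ?_)) <;>
          (show _ = _; field_simp; try ring)
    · rintro ⟨a, b, c, d⟩ ⟨ha, hb, hc, hd⟩
      have hbc : (0:ℝ) < b + c := by linarith
      simp only [localMove, Set.mem_setOf_eq]
      exact ⟨by positivity, hb, hc, by positivity⟩
    · rintro ⟨a, b, c, d⟩ ⟨ha, hb, hc, hd⟩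
      have hbc : (0:ℝ) < b + c := by linarith
      simp only [localMove, localMoveInv, Set.mem_setOf_eq]
      exact ⟨by positivity, hb, hc, by positivity⟩
  · intro u
    set S : ℝ := exp (u 1) + exp (u 2) with hSdef
    have hS0 : (0:ℝ) < S := by positivity
    have hSne : S ≠ 0 := ne_of_gt hS0
    set P : Fin 4 → (Fin 4 → ℝ) →L[ℝ] ℝ :=
      fun i => ContinuousLinearMap.proj i with hP
    -- derivative of u ↦ log (exp (u 1) + exp (u 2))
    have hSder : HasFDerivAt (fun v : Fin 4 → ℝ => exp (v 1) + exp (v 2))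
        (exp (u 1) • P 1 + exp (u 2) • P 2) u :=
      ((hasFDerivAt_apply 1 u).exp).add ((hasFDerivAt_apply 2 u).exp)
    have hlogS : HasFDerivAt (fun v : Fin 4 → ℝ => log (exp (v 1) + exp (v 2)))
        (S⁻¹ • (exp (u 1) • P 1 + exp (u 2) • P 2)) u := hSder.log hSne
    set L : (Fin 4 → ℝ) →L[ℝ] ℝ := S⁻¹ • (exp (u 1) • P 1 + exp (u 2) • P 2) with hL
    set D : Fin 4 → (Fin 4 → ℝ) →L[ℝ] ℝ :=
      ![P 1 + P 2 - P 0 - L, P 1, P 2, P 3 + L] with hD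
    refine ⟨ContinuousLinearMap.pi D, ?_, ?_⟩
    · -- rewrite localMoveLog into a nicer form
      have hrw : localMoveLog = fun v : Fin 4 → ℝ =>
          ![v 1 + v 2 - v 0 - log (exp (v 1) + exp (v 2)), v 1, v 2,
            v 3 + log (exp (v 1) + exp (v 2))] := by
        funext v
        have h1 : (0:ℝ) < exp (v 1) + exp (v 2) := by positivity
        have h1' : exp (v 1) + exp (v 2) ≠ 0 := ne_of_gt h1
        ext i
        fin_cases i <;>
          simp [localMoveLog, log_div, log_mul, exp_ne_zero, h1', log_exp] <;>
          ring
      rw [hrw]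
      apply hasFDerivAt_pi''
      intro i
      rw [ContinuousLinearMap.proj_pi]
      fin_cases i
      · simpa [hD, hP, Pi.add_def, Pi.sub_def] using
          ((((hasFDerivAt_apply 1 u).add (hasFDerivAt_apply 2 u)).sub
            (hasFDerivAt_apply 0 u)).sub hlogS)
      · simpa [hD, hP] using hasFDerivAt_apply 1 u
      · simpa [hD, hP] using hasFDerivAt_apply 2 u
      · simpa [hD, hP, Pi.add_def] using (hasFDerivAt_apply 3 u).add hlogS
    · -- determinant computation
      rw [← LinearMap.det_toMatrix']
      have hM : LinearMap.toMatrix'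
            ((ContinuousLinearMap.pi D : (Fin 4 → ℝ) →L[ℝ] (Fin 4 → ℝ)) :
              (Fin 4 → ℝ) →ₗ[ℝ] (Fin 4 → ℝ)) =
          !![-1, 1 - S⁻¹ * exp (u 1), 1 - S⁻¹ * exp (u 2), 0;
             0, 1, 0, 0;
             0, 0, 1, 0;
             0, S⁻¹ * exp (u 1), S⁻¹ * exp (u 2), 1] := by
        ext i j
        fin_cases i <;> fin_cases j <;>
          simp [hD, hL, hP, LinearMap.toMatrix'_apply, Pi.single_apply,
            Matrix.vecHead, Matrix.vecTail, Function.comp]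
      rw [hM]
      have : (!![-1, 1 - S⁻¹ * exp (u 1), 1 - S⁻¹ * exp (u 2), 0;
             0, 1, 0, 0;
             0, 0, 1, 0;
             0, S⁻¹ * exp (u 1), S⁻¹ * exp (u 2), 1] : Matrix (Fin 4) (Fin 4) ℝ).det
          = -1 := by
        simp [Matrix.det_succ_row_zero, Fin.sum_univ_succ]
      rw [this]
      norm_num
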